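/- Let G ~ N(0,1), σ, T > 0, and f : ℝ → ℝ bounded measurable. Define u(x) := E[f(x e^{σ√T G - σ²T/2})]. Then u is twice differentiable on (0,∞) and u''(x) = E[f(x e^{σ√T G - σ²T/2}) · ( (G/(xσ√T))² - G/(x²σ√T) - 1/(x²σ²T) )]. -/

import Mathlib

open MeasureTheory ProbabilityTheory Filter Metric

noncomputable section
namespace Stmt12Aux

def phi (c0 g : ℝ) : ℝ := c0 * Real.exp (-(g^2)/2)

lemma phi_nonneg {c0 : ℝ} (h : 0 ≤ c0) (g : ℝ) : 0 ≤ phi c0 g := by unfold phi; positivity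

lemma phi_deriv (c0 y : ℝ) : HasDerivAt (phi c0) (-y * phi c0 y) y := by
  have h1 : HasDerivAt (fun g : ℝ => -(g^2)/2) (-y) y := by
    have := ((hasDerivAt_pow 2 y).neg).div_const 2
    refine this.congr_deriv ?_
    simp; ring
  have h2 := (Real.hasDerivAt_exp (-(y^2)/2)).comp y h1
  have h3 := h2.const_mul c0
  refine h3.congr_deriv ?_
  unfold phi; ring

def qq (a b x s : ℝ) : ℝ := (s - (Real.log x - b))/a

lemma qq_deriv (a b s : ℝ) {x : ℝ} (hx : 0 < x) :
    HasDerivAt (fun y => qq a b y s) (-(x⁻¹)/a) x := by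
  unfold qq
  exact (((Real.hasDerivAt_log hx.ne').sub_const b).const_sub s).div_const a

def FF (f : ℝ → ℝ) (c0 a b x s : ℝ) : ℝ := f (Real.exp s) / a * phi c0 (qq a b x s)

def FF1 (f : ℝ → ℝ) (c0 a b x s : ℝ) : ℝ :=
  f (Real.exp s) / a * (phi c0 (qq a b x s) * (qq a b x s / (a * x)))

def FF2 (f : ℝ → ℝ) (c0 a b x s : ℝ) : ℝ :=
  f (Real.exp s) / a * (phi c0 (qq a b x s) *
    ((qq a b x s)^2/(a^2*x^2) - 1/(a^2*x^2) - qq a b x s/(a*x^2)))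

lemma FF_deriv {f : ℝ → ℝ} {c0 a b s x : ℝ} (ha : a ≠ 0) (hx : 0 < x) :
    HasDerivAt (fun y => FF f c0 a b y s) (FF1 f c0 a b x s) x := by
  have hphid : HasDerivAt (fun y => phi c0 (qq a b y s))
      ((-(qq a b x s) * phi c0 (qq a b x s)) * (-(x⁻¹)/a)) x :=
    (phi_deriv c0 (qq a b x s)).comp (h₂ := phi c0) x (qq_deriv a b s hx)
  have h3 := hphid.const_mul (f (Real.exp s) / a)
  refine h3.congr_deriv ?_
  unfold FF1
  field_simp

lemma FF1_deriv {f : ℝ → ℝ} {c0 a b s x : ℝ} (ha : a ≠ 0) (hx : 0 < x) :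
    HasDerivAt (fun y => FF1 f c0 a b y s) (FF2 f c0 a b x s) x := by
  have hqd := qq_deriv a b s hx
  have hphid : HasDerivAt (fun y => phi c0 (qq a b y s))
      ((-(qq a b x s) * phi c0 (qq a b x s)) * (-(x⁻¹)/a)) x :=
    (phi_deriv c0 (qq a b x s)).comp (h₂ := phi c0) x hqd
  have hinv : HasDerivAt (fun y : ℝ => y⁻¹) (-(x^2)⁻¹) x := hasDerivAt_inv hx.ne'
  have hprod := (hphid.mul hqd).mul hinv
  have h3 := hprod.const_mul (f (Real.exp s) / a^2)
  have heq : (fun y => FF1 f c0 a b y s)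
      = fun y => f (Real.exp s) / a^2 * (phi c0 (qq a b y s) * qq a b y s * y⁻¹) := by
    funext y
    unfold FF1
    field_simp
  rw [heq]
  refine h3.congr_deriv ?_
  unfold FF2
  simp only [Pi.mul_apply]
  field_simp
  ring

lemma FF_meas {f : ℝ → ℝ} (hf : Measurable f) (c0 a b x : ℝ) :
    Measurable (fun s => FF f c0 a b x s) := by
  unfold FF phi qq
  exact ((hf.comp Real.measurable_exp).div_const a).mul (by fun_prop)

lemma FF1_meas {f : ℝ → ℝ} (hf : Measurable f) (c0 a b x : ℝ) :
    Measurable (fun s => FF1 f c0 a b x s) := by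
  unfold FF1 phi qq
  exact ((hf.comp Real.measurable_exp).div_const a).mul (by fun_prop)

lemma FF2_meas {f : ℝ → ℝ} (hf : Measurable f) (c0 a b x : ℝ) :
    Measurable (fun s => FF2 f c0 a b x s) := by
  unfold FF2 phi qq
  exact ((hf.comp Real.measurable_exp).div_const a).mul (by fun_prop)

lemma phi_qq_bound {c0 a b L : ℝ} (hc0 : 0 ≤ c0) (ha : 0 < a)
    {x' s : ℝ} (hc : |Real.log x' - b| ≤ L) :
    phi c0 (qq a b x' s) ≤ (c0 * Real.exp (L^2/(2*a^2))) * Real.exp (-(1/(4*a^2)) * s^2) := by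
  unfold phi qq
  rw [mul_assoc, ← Real.exp_add]
  apply mul_le_mul_of_nonneg_left _ hc0
  apply Real.exp_le_exp.2
  set cc := Real.log x' - b with hcc
  clear_value cc
  have ha2 : (0:ℝ) < a^2 := by positivity
  have h1 : cc^2 ≤ L^2 := by
    have := pow_le_pow_left₀ (abs_nonneg cc) hc 2
    rwa [sq_abs] at this
  have key : s^2/4 - L^2/2 ≤ (s-cc)^2/2 := by nlinarith [sq_nonneg (s - 2*cc), h1]
  rw [show -((s - cc)/a)^2/2 = (-((s-cc)^2)/2)/a^2 from by ring,
      show L^2/(2*a^2) + -(1/(4*a^2))*s^2 = (L^2/2 - s^2/4)/a^2 from by ring,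
      div_le_div_iff₀ ha2 ha2]
  nlinarith [mul_le_mul_of_nonneg_right key ha2.le]

lemma qq_abs_bound {a b L : ℝ} (ha : 0 < a) {x' s : ℝ} (hc : |Real.log x' - b| ≤ L) :
    |qq a b x' s| ≤ (|s| + L)/a := by
  unfold qq
  rw [abs_div, abs_of_pos ha]
  gcongr
  exact (abs_sub s _).trans (by linarith)

lemma integrable_quad_gauss {k : ℝ} (hk : 0 < k) (p q r : ℝ) :
    Integrable (fun s : ℝ => (p + q * |s| + r * s^2) * Real.exp (-k * s^2)) := by
  have h0 := integrable_exp_neg_mul_sq hk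
  have h1 : Integrable (fun s : ℝ => |s| * Real.exp (-k*s^2)) := by
    have h := (integrable_mul_exp_neg_mul_sq hk).abs
    refine h.congr ?_
    filter_upwards with s
    rw [abs_mul, abs_of_pos (Real.exp_pos _)]
  have h2 : Integrable (fun s : ℝ => s^2 * Real.exp (-k*s^2)) := by
    have h := integrable_rpow_mul_exp_neg_mul_sq hk (by norm_num : (-1:ℝ) < 2)
    refine h.congr ?_
    filter_upwards with s
    rw [show ((2:ℝ)) = ((2:ℕ):ℝ) from by norm_num, Real.rpow_natCast]
  have h := ((h0.const_mul p).add (h1.const_mul q)).add (h2.const_mul r)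
  refine h.congr ?_
  filter_upwards with s
  simp only [Pi.add_apply]
  ring

lemma integrable_lin_gauss {k : ℝ} (hk : 0 < k) (p q : ℝ) :
    Integrable (fun s : ℝ => (p + q * |s|) * Real.exp (-k * s^2)) := by
  have h := integrable_quad_gauss hk p q 0
  refine h.congr ?_
  filter_upwards with s
  ring

lemma gauss_int {Ω : Type*} [MeasurableSpace Ω] (μ : Measure Ω) (G : Ω → ℝ) (hG : Measurable G)
    (hlaw : Measure.map G μ = gaussianReal 0 1) (h : ℝ → ℝ) (hm : Measurable h) :
    ∫ ω, h (G ω) ∂μ = ∫ y, ((Real.sqrt (2*Real.pi))⁻¹ * Real.exp (-(y^2)/2)) * h y := by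
  calc ∫ ω, h (G ω) ∂μ = ∫ y, h y ∂(Measure.map G μ) :=
        (integral_map hG.aemeasurable hm.aestronglyMeasurable).symm
    _ = ∫ y, h y ∂(gaussianReal 0 1) := by rw [hlaw]
    _ = ∫ y, ((Real.sqrt (2*Real.pi))⁻¹ * Real.exp (-(y^2)/2)) * h y := by
        rw [gaussianReal_of_var_ne_zero _ one_ne_zero, gaussianPDF_def]
        rw [show (fun x => ENNReal.ofReal (gaussianPDFReal 0 1 x))
            = (fun x => ((Real.toNNReal (gaussianPDFReal 0 1 x) : NNReal) : ENNReal)) from rfl]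
        rw [integral_withDensity_eq_integral_smul
          ((measurable_gaussianPDFReal 0 1).real_toNNReal) h]
        congr 1
        funext y
        rw [NNReal.smul_def, Real.coe_toNNReal _ (gaussianPDFReal_nonneg _ _ _), smul_eq_mul]
        congr 1
        unfold gaussianPDFReal
        norm_num

lemma CoV (a c : ℝ) (phi h : ℝ → ℝ) (ha : a ≠ 0) :
    ∫ s, phi ((s - c)/a) * h s = |a| * ∫ t, phi t * h (c + a*t) := by
  have e1 : ∫ s, phi ((s - c)/a) * h s
      = ∫ s, (fun t => phi (t/a) * h (t + c)) (s - c) := by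
    congr 1
    funext s
    simp [sub_add_cancel]
  rw [e1, integral_sub_right_eq_self (fun t => phi (t/a) * h (t + c)) c]
  have e2 : ∫ t, phi (t/a) * h (t + c)
      = ∫ t, (fun y => phi y * h (a*y + c)) (t/a) := by
    congr 1
    funext t
    simp [mul_div_cancel₀, ha]
  rw [e2, show (fun y => phi y * h (a*y + c)) = (fun t => phi t * h (c + a*t)) from
    funext fun t => by rw [add_comm],
    Measure.integral_comp_div (fun t => phi t * h (c + a*t)) a]
  simp only [smul_eq_mul]

lemma ball_facts {x : ℝ} (hx : 0 < x) {b : ℝ} {x' : ℝ} (hx' : x' ∈ ball x (x/2)) :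
    0 < x' ∧ x/2 ≤ x' ∧
      |Real.log x' - b| ≤ (|Real.log (x/2)| + |Real.log (2*x)|) + |b| := by
  rw [mem_ball, Real.dist_eq, abs_lt] at hx'
  have h1 : x/2 ≤ x' := by linarith [hx'.1]
  have h2 : x' ≤ 2*x := by linarith [hx'.2]
  have hx'0 : 0 < x' := lt_of_lt_of_le (by linarith) h1
  refine ⟨hx'0, h1, ?_⟩
  have hl1 : Real.log x' ≤ Real.log (2*x) := Real.log_le_log hx'0 h2
  have hl2 : Real.log (x/2) ≤ Real.log x' := Real.log_le_log (by positivity) h1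
  have habs : |Real.log x'| ≤ |Real.log (x/2)| + |Real.log (2*x)| := by
    rw [abs_le]
    constructor
    · linarith [neg_abs_le (Real.log (x/2)), abs_nonneg (Real.log (2*x))]
    · linarith [le_abs_self (Real.log (2*x)), abs_nonneg (Real.log (x/2))]
  calc |Real.log x' - b| ≤ |Real.log x'| + |b| := abs_sub _ _
    _ ≤ (|Real.log (x/2)| + |Real.log (2*x)|) + |b| := by linarith

lemma key_deriv1 {f : ℝ → ℝ} (hf : Measurable f) {Cf : ℝ} (hCf : ∀ y, |f y| ≤ Cf)
    {c0 a : ℝ} (hc0 : 0 ≤ c0) (ha : 0 < a) (b : ℝ) {x : ℝ} (hx : 0 < x) :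
    Integrable (fun s => FF1 f c0 a b x s) ∧
    HasDerivAt (fun y => ∫ s, FF f c0 a b y s) (∫ s, FF1 f c0 a b x s) x := by
  have hCf0 : 0 ≤ Cf := le_trans (abs_nonneg _) (hCf 0)
  set L : ℝ := (|Real.log (x/2)| + |Real.log (2*x)|) + |b| with hL
  have hL0 : 0 ≤ L := by positivity
  set k : ℝ := 1/(4*a^2) with hk
  have hk0 : 0 < k := by positivity
  set D : ℝ := c0 * Real.exp (L^2/(2*a^2)) with hD
  have hD0 : 0 ≤ D := by positivity
  have hε : 0 < x/2 := by positivity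
  have hbd : ∀ s : ℝ, ∀ x' ∈ ball x (x/2), ‖FF1 f c0 a b x' s‖ ≤
      (Cf/a) * ((D * Real.exp (-k * s^2)) * (((|s| + L)/a)/(a*(x/2)))) := by
    intro s x' hx'
    obtain ⟨hx'0, hx'h, hcL⟩ := ball_facts hx (b := b) hx'
    have e1 : ‖FF1 f c0 a b x' s‖ =
        |f (Real.exp s)|/a * (phi c0 (qq a b x' s) * (|qq a b x' s|/(a*x'))) := by
      rw [Real.norm_eq_abs]
      unfold FF1
      rw [abs_mul, abs_mul, abs_div, abs_div, abs_of_pos ha,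
        abs_of_nonneg (phi_nonneg hc0 _), abs_mul, abs_of_pos ha, abs_of_pos hx'0]
    rw [e1]
    have h1 : |f (Real.exp s)|/a ≤ Cf/a := by gcongr; exact hCf _
    have h2 : phi c0 (qq a b x' s) ≤ D * Real.exp (-k * s^2) := phi_qq_bound hc0 ha hcL
    have h3 : |qq a b x' s|/(a*x') ≤ ((|s| + L)/a)/(a*(x/2)) :=
      div_le_div₀ (by positivity) (qq_abs_bound ha hcL) (by positivity)
        (mul_le_mul_of_nonneg_left hx'h ha.le)
    exact mul_le_mul h1
      (mul_le_mul h2 h3 (by positivity) (by positivity))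
      (mul_nonneg (phi_nonneg hc0 _) (by positivity)) (by positivity)
  have hbint : Integrable (fun s : ℝ =>
      (Cf/a) * ((D * Real.exp (-k * s^2)) * (((|s| + L)/a)/(a*(x/2))))) := by
    have h := integrable_lin_gauss hk0 ((Cf/a) * D * (L/(a*(a*(x/2)))))
      ((Cf/a) * D * (1/(a*(a*(x/2)))))
    refine h.congr ?_
    filter_upwards with s
    ring
  have hmeasF : ∀ᶠ x' in nhds x, AEStronglyMeasurable (fun s => FF f c0 a b x' s) volume :=
    Eventually.of_forall fun x' => (FF_meas hf c0 a b x').aestronglyMeasurable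
  have hintF : Integrable (fun s => FF f c0 a b x s) := by
    refine Integrable.mono' (g := fun s => (Cf/a) * (D * Real.exp (-k * s^2))) ?_
      (FF_meas hf c0 a b x).aestronglyMeasurable ?_
    · exact ((integrable_exp_neg_mul_sq hk0).const_mul D).const_mul (Cf/a)
    · filter_upwards with s
      have e1 : ‖FF f c0 a b x s‖ = |f (Real.exp s)|/a * phi c0 (qq a b x s) := by
        rw [Real.norm_eq_abs]
        unfold FF
        rw [abs_mul, abs_div, abs_of_pos ha, abs_of_nonneg (phi_nonneg hc0 _)]
      rw [e1]
      have h1 : |f (Real.exp s)|/a ≤ Cf/a := by gcongr; exact hCf _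
      have h2 : phi c0 (qq a b x s) ≤ D * Real.exp (-k * s^2) :=
        phi_qq_bound hc0 ha (ball_facts hx (b := b) (mem_ball_self hε)).2.2
      exact mul_le_mul h1 h2 (phi_nonneg hc0 _) (by positivity)
  exact hasDerivAt_integral_of_dominated_loc_of_deriv_le (ball_mem_nhds x hε) hmeasF hintF
    (F' := fun x' s => FF1 f c0 a b x' s)
    (FF1_meas hf c0 a b x).aestronglyMeasurable
    (Eventually.of_forall fun s => hbd s) hbint
    (Eventually.of_forall fun s x' hx' =>
      FF_deriv ha.ne' (ball_facts hx (b := b) hx').1)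

lemma key_deriv2 {f : ℝ → ℝ} (hf : Measurable f) {Cf : ℝ} (hCf : ∀ y, |f y| ≤ Cf)
    {c0 a : ℝ} (hc0 : 0 ≤ c0) (ha : 0 < a) (b : ℝ) {x : ℝ} (hx : 0 < x) :
    HasDerivAt (fun y => ∫ s, FF1 f c0 a b y s) (∫ s, FF2 f c0 a b x s) x := by
  have hCf0 : 0 ≤ Cf := le_trans (abs_nonneg _) (hCf 0)
  set L : ℝ := (|Real.log (x/2)| + |Real.log (2*x)|) + |b| with hL
  have hL0 : 0 ≤ L := by positivity
  set k : ℝ := 1/(4*a^2) with hk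
  have hk0 : 0 < k := by positivity
  set D : ℝ := c0 * Real.exp (L^2/(2*a^2)) with hD
  have hD0 : 0 ≤ D := by positivity
  have hε : 0 < x/2 := by positivity
  have hbd : ∀ s : ℝ, ∀ x' ∈ ball x (x/2), ‖FF2 f c0 a b x' s‖ ≤
      (Cf/a) * ((D * Real.exp (-k * s^2)) *
        (((|s| + L)/a)^2/(a^2*(x/2)^2) + 1/(a^2*(x/2)^2) + ((|s| + L)/a)/(a*(x/2)^2))) := by
    intro s x' hx'
    obtain ⟨hx'0, hx'h, hcL⟩ := ball_facts hx (b := b) hx'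
    have hq1 := qq_abs_bound (s := s) ha hcL
    have hq2 : (qq a b x' s)^2 ≤ ((|s| + L)/a)^2 := by
      have := pow_le_pow_left₀ (abs_nonneg (qq a b x' s)) hq1 2
      rwa [sq_abs] at this
    have hx'2 : (x/2)^2 ≤ x'^2 := by nlinarith
    have hd1 : a^2*(x/2)^2 ≤ a^2*x'^2 := mul_le_mul_of_nonneg_left hx'2 (sq_nonneg a)
    have hd2 : a*(x/2)^2 ≤ a*x'^2 := mul_le_mul_of_nonneg_left hx'2 ha.le
    have hBr : |(qq a b x' s)^2/(a^2*x'^2) - 1/(a^2*x'^2) - qq a b x' s/(a*x'^2)|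
        ≤ ((|s| + L)/a)^2/(a^2*(x/2)^2) + 1/(a^2*(x/2)^2) + ((|s| + L)/a)/(a*(x/2)^2) := by
      have t1 : |(qq a b x' s)^2/(a^2*x'^2) - 1/(a^2*x'^2) - qq a b x' s/(a*x'^2)|
          ≤ |(qq a b x' s)^2/(a^2*x'^2)| + |1/(a^2*x'^2)| + |qq a b x' s/(a*x'^2)| := by
        have u1 := abs_sub ((qq a b x' s)^2/(a^2*x'^2) - 1/(a^2*x'^2)) (qq a b x' s/(a*x'^2))
        have u2 := abs_sub ((qq a b x' s)^2/(a^2*x'^2)) (1/(a^2*x'^2))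
        linarith
      refine t1.trans ?_
      rw [abs_div, abs_div, abs_div, abs_of_nonneg (sq_nonneg (qq a b x' s)), abs_one,
        abs_of_pos (show (0:ℝ) < a^2*x'^2 by positivity),
        abs_of_pos (show (0:ℝ) < a*x'^2 by positivity)]
      refine add_le_add (add_le_add ?_ ?_) ?_
      · exact div_le_div₀ (by positivity) hq2 (by positivity) hd1
      · exact div_le_div₀ (by norm_num) le_rfl (by positivity) hd1
      · exact div_le_div₀ (by positivity) hq1 (by positivity) hd2
    have e1 : ‖FF2 f c0 a b x' s‖ = |f (Real.exp s)|/a * (phi c0 (qq a b x' s) *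
        |(qq a b x' s)^2/(a^2*x'^2) - 1/(a^2*x'^2) - qq a b x' s/(a*x'^2)|) := by
      rw [Real.norm_eq_abs]
      unfold FF2
      rw [abs_mul, abs_mul, abs_div, abs_of_pos ha, abs_of_nonneg (phi_nonneg hc0 _)]
    rw [e1]
    have h1 : |f (Real.exp s)|/a ≤ Cf/a := by gcongr; exact hCf _
    have h2 : phi c0 (qq a b x' s) ≤ D * Real.exp (-k * s^2) := phi_qq_bound hc0 ha hcL
    exact mul_le_mul h1
      (mul_le_mul h2 hBr (abs_nonneg _) (by positivity))
      (mul_nonneg (phi_nonneg hc0 _) (abs_nonneg _)) (by positivity)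
  have hbint : Integrable (fun s : ℝ => (Cf/a) * ((D * Real.exp (-k * s^2)) *
      (((|s| + L)/a)^2/(a^2*(x/2)^2) + 1/(a^2*(x/2)^2) + ((|s| + L)/a)/(a*(x/2)^2)))) := by
    have h := integrable_quad_gauss hk0
      ((Cf/a) * D * ((L^2/a^2)/(a^2*(x/2)^2) + 1/(a^2*(x/2)^2) + (L/a)/(a*(x/2)^2)))
      ((Cf/a) * D * ((2*L/a^2)/(a^2*(x/2)^2) + (1/a)/(a*(x/2)^2)))
      ((Cf/a) * D * ((1/a^2)/(a^2*(x/2)^2)))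
    refine h.congr ?_
    filter_upwards with s
    rw [← sq_abs s]
    ring
  have hmeasF : ∀ᶠ x' in nhds x, AEStronglyMeasurable (fun s => FF1 f c0 a b x' s) volume :=
    Eventually.of_forall fun x' => (FF1_meas hf c0 a b x').aestronglyMeasurable
  have hintF : Integrable (fun s => FF1 f c0 a b x s) :=
    (key_deriv1 hf hCf hc0 ha b hx).1
  exact (hasDerivAt_integral_of_dominated_loc_of_deriv_le (ball_mem_nhds x hε) hmeasF hintF
    (F' := fun x' s => FF2 f c0 a b x' s)
    (FF2_meas hf c0 a b x).aestronglyMeasurable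
    (Eventually.of_forall fun s => hbd s) hbint
    (Eventually.of_forall fun s x' hx' =>
      FF1_deriv ha.ne' (ball_facts hx (b := b) hx').1)).2

end Stmt12Aux
end

open Stmt12Aux in
/-- Let `G ~ N(0,1)`, `σ, T > 0`, `f` bounded measurable and
`u(x) := E[f(x e^{σ√T G - σ²T/2})]`.  Then `u` is twice differentiable on `(0,∞)` with
`u''(x) = E[f(x e^{σ√T G - σ²T/2}) ((G/(xσ√T))² - G/(x²σ√T) - 1/(x²σ²T))]`. -/
theorem stmt_12 {Ω : Type*} [MeasurableSpace Ω] (μ : Measure Ω) [IsProbabilityMeasure μ]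
    (σ T : ℝ) (hσ : 0 < σ) (hT : 0 < T)
    (G : Ω → ℝ) (hG : Measurable G) (hlaw : Measure.map G μ = gaussianReal 0 1)
    (f : ℝ → ℝ) (hfmeas : Measurable f) (hfbdd : ∃ C : ℝ, ∀ y, |f y| ≤ C)
    (u : ℝ → ℝ)
    (hu : ∀ x, u x = ∫ ω, f (x * Real.exp (σ * Real.sqrt T * G ω - σ ^ 2 * T / 2)) ∂μ) :
    ∀ x : ℝ, 0 < x →
      DifferentiableAt ℝ u x ∧
      HasDerivAt (deriv u)
        (∫ ω, f (x * Real.exp (σ * Real.sqrt T * G ω - σ ^ 2 * T / 2)) *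
          ((G ω / (x * σ * Real.sqrt T)) ^ 2 - G ω / (x ^ 2 * σ * Real.sqrt T)
            - 1 / (x ^ 2 * σ ^ 2 * T)) ∂μ) x := by
  obtain ⟨C, hC0⟩ := hfbdd
  have hCf : ∀ y, |f y| ≤ max C 0 := fun y => le_trans (hC0 y) (le_max_left _ _)
  have hT' : 0 < Real.sqrt T := Real.sqrt_pos.2 hT
  have ha : 0 < σ * Real.sqrt T := mul_pos hσ hT'
  have hc0 : (0:ℝ) ≤ (Real.sqrt (2*Real.pi))⁻¹ := by positivity
  have hgauss : ∀ (h : ℝ → ℝ), Measurable h →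
      ∫ ω, h (G ω) ∂μ = ∫ y, ((Real.sqrt (2*Real.pi))⁻¹ * Real.exp (-(y^2)/2)) * h y :=
    fun h hm => gauss_int μ G hG hlaw h hm
  -- representation of u
  have hrepr : ∀ z : ℝ, 0 < z →
      u z = ∫ s, FF f (Real.sqrt (2*Real.pi))⁻¹ (σ * Real.sqrt T) (σ^2*T/2) z s := by
    intro z hz
    have hm1 : Measurable (fun y : ℝ =>
        f (z * Real.exp (σ * Real.sqrt T * y - σ^2*T/2))) :=
      hfmeas.comp (by fun_prop)
    have e1 : ∫ ω, f (z * Real.exp (σ * Real.sqrt T * G ω - σ^2*T/2)) ∂μ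
        = ∫ y, ((Real.sqrt (2*Real.pi))⁻¹ * Real.exp (-(y^2)/2)) *
            f (z * Real.exp (σ * Real.sqrt T * y - σ^2*T/2)) := hgauss _ hm1
    have e3 : ∫ y, ((Real.sqrt (2*Real.pi))⁻¹ * Real.exp (-(y^2)/2)) *
            f (z * Real.exp (σ * Real.sqrt T * y - σ^2*T/2))
        = ∫ t, ((Real.sqrt (2*Real.pi))⁻¹ * Real.exp (-(t^2)/2)) *
            f (Real.exp ((Real.log z - σ^2*T/2) + (σ * Real.sqrt T)*t)) := by
      congr 1
      funext t
      rw [show (Real.log z - σ^2*T/2) + (σ * Real.sqrt T)*t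
          = Real.log z + ((σ * Real.sqrt T)*t - σ^2*T/2) from by ring,
        Real.exp_add, Real.exp_log hz]
    have e2 : ∫ s, ((Real.sqrt (2*Real.pi))⁻¹ *
            Real.exp (-(((s - (Real.log z - σ^2*T/2))/(σ * Real.sqrt T))^2)/2)) *
            f (Real.exp s)
        = |σ * Real.sqrt T| * ∫ t, ((Real.sqrt (2*Real.pi))⁻¹ * Real.exp (-(t^2)/2)) *
            f (Real.exp ((Real.log z - σ^2*T/2) + (σ * Real.sqrt T)*t)) :=
      CoV (σ * Real.sqrt T) (Real.log z - σ^2*T/2)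
        (fun g => (Real.sqrt (2*Real.pi))⁻¹ * Real.exp (-(g^2)/2))
        (fun s => f (Real.exp s)) ha.ne'
    rw [hu z, e1, e3, show ∫ t, ((Real.sqrt (2*Real.pi))⁻¹ * Real.exp (-(t^2)/2)) *
            f (Real.exp ((Real.log z - σ^2*T/2) + (σ * Real.sqrt T)*t))
        = (σ * Real.sqrt T)⁻¹ * ∫ s, ((Real.sqrt (2*Real.pi))⁻¹ *
            Real.exp (-(((s - (Real.log z - σ^2*T/2))/(σ * Real.sqrt T))^2)/2)) *
            f (Real.exp s) from by
      rw [e2, abs_of_pos ha, ← mul_assoc, inv_mul_cancel₀ ha.ne', one_mul]]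
    rw [← integral_const_mul]
    congr 1
    funext s
    unfold FF phi qq
    ring
  intro x hx
  have hx_ev : ∀ᶠ y in nhds x, y ∈ Set.Ioi (0:ℝ) := isOpen_Ioi.eventually_mem hx
  have huev : u =ᶠ[nhds x]
      (fun y => ∫ s, FF f (Real.sqrt (2*Real.pi))⁻¹ (σ * Real.sqrt T) (σ^2*T/2) y s) :=
    hx_ev.mono fun y hy => hrepr y hy
  have hD1 : HasDerivAt u
      (∫ s, FF1 f (Real.sqrt (2*Real.pi))⁻¹ (σ * Real.sqrt T) (σ^2*T/2) x s) x :=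
    HasDerivAt.congr_of_eventuallyEq
      (key_deriv1 hfmeas hCf hc0 ha (σ^2*T/2) hx).2 huev
  refine ⟨hD1.differentiableAt, ?_⟩
  have hder_ev : deriv u =ᶠ[nhds x]
      (fun y => ∫ s, FF1 f (Real.sqrt (2*Real.pi))⁻¹ (σ * Real.sqrt T) (σ^2*T/2) y s) := by
    filter_upwards [hx_ev] with y hy
    have huev_y : u =ᶠ[nhds y]
        (fun z => ∫ s, FF f (Real.sqrt (2*Real.pi))⁻¹ (σ * Real.sqrt T) (σ^2*T/2) z s) :=
      (isOpen_Ioi.eventually_mem hy).mono fun z hz => hrepr z hz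
    have hdy : HasDerivAt u
        (∫ s, FF1 f (Real.sqrt (2*Real.pi))⁻¹ (σ * Real.sqrt T) (σ^2*T/2) y s) y :=
      HasDerivAt.congr_of_eventuallyEq
        (key_deriv1 hfmeas hCf hc0 ha (σ^2*T/2) hy).2 huev_y
    exact hdy.deriv
  have hD2 : HasDerivAt (deriv u)
      (∫ s, FF2 f (Real.sqrt (2*Real.pi))⁻¹ (σ * Real.sqrt T) (σ^2*T/2) x s) x :=
    HasDerivAt.congr_of_eventuallyEq
      (key_deriv2 hfmeas hCf hc0 ha (σ^2*T/2) hx) hder_ev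
  -- identify the second derivative with the target integral
  have hbr : ∀ t : ℝ,
      t^2/((σ * Real.sqrt T)^2*x^2) - 1/((σ * Real.sqrt T)^2*x^2)
        - t/((σ * Real.sqrt T)*x^2)
      = (t/(x*σ*Real.sqrt T))^2 - t/(x^2*σ*Real.sqrt T) - 1/(x^2*σ^2*T) := by
    intro t
    have h3 : (x*σ*Real.sqrt T)^2 = σ^2*T*x^2 := by
      rw [mul_pow, mul_pow, Real.sq_sqrt hT.le]
      ring
    have h2 : (σ*Real.sqrt T)^2 = σ^2*T := by rw [mul_pow, Real.sq_sqrt hT.le]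
    rw [div_pow, h3, h2]
    ring
  have hfinal : ∫ s, FF2 f (Real.sqrt (2*Real.pi))⁻¹ (σ * Real.sqrt T) (σ^2*T/2) x s
      = ∫ ω, f (x * Real.exp (σ * Real.sqrt T * G ω - σ^2*T/2)) *
          ((G ω / (x * σ * Real.sqrt T))^2 - G ω/(x^2*σ*Real.sqrt T) - 1/(x^2*σ^2*T)) ∂μ := by
    have hm2 : Measurable (fun y : ℝ =>
        f (x * Real.exp (σ * Real.sqrt T * y - σ^2*T/2)) *
          ((y / (x * σ * Real.sqrt T))^2 - y/(x^2*σ*Real.sqrt T) - 1/(x^2*σ^2*T))) :=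
      (hfmeas.comp (by fun_prop)).mul (by fun_prop)
    have e1 : ∫ ω, f (x * Real.exp (σ * Real.sqrt T * G ω - σ^2*T/2)) *
          ((G ω / (x * σ * Real.sqrt T))^2 - G ω/(x^2*σ*Real.sqrt T) - 1/(x^2*σ^2*T)) ∂μ
        = ∫ y, ((Real.sqrt (2*Real.pi))⁻¹ * Real.exp (-(y^2)/2)) *
            (f (x * Real.exp (σ * Real.sqrt T * y - σ^2*T/2)) *
              ((y / (x * σ * Real.sqrt T))^2 - y/(x^2*σ*Real.sqrt T) - 1/(x^2*σ^2*T))) :=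
      hgauss _ hm2
    have e2 : ∫ s, ((Real.sqrt (2*Real.pi))⁻¹ *
            Real.exp (-(((s - (Real.log x - σ^2*T/2))/(σ * Real.sqrt T))^2)/2)) *
            (f (Real.exp s) *
              ((qq (σ * Real.sqrt T) (σ^2*T/2) x s)^2/((σ * Real.sqrt T)^2*x^2)
                - 1/((σ * Real.sqrt T)^2*x^2)
                - qq (σ * Real.sqrt T) (σ^2*T/2) x s/((σ * Real.sqrt T)*x^2)))
        = |σ * Real.sqrt T| * ∫ t, ((Real.sqrt (2*Real.pi))⁻¹ * Real.exp (-(t^2)/2)) *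
            (f (Real.exp ((Real.log x - σ^2*T/2) + (σ * Real.sqrt T)*t)) *
              ((qq (σ * Real.sqrt T) (σ^2*T/2) x ((Real.log x - σ^2*T/2) + (σ * Real.sqrt T)*t))^2/((σ * Real.sqrt T)^2*x^2)
                - 1/((σ * Real.sqrt T)^2*x^2)
                - qq (σ * Real.sqrt T) (σ^2*T/2) x ((Real.log x - σ^2*T/2) + (σ * Real.sqrt T)*t)/((σ * Real.sqrt T)*x^2))) :=
      CoV (σ * Real.sqrt T) (Real.log x - σ^2*T/2)
        (fun g => (Real.sqrt (2*Real.pi))⁻¹ * Real.exp (-(g^2)/2))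
        (fun s => f (Real.exp s) *
          ((qq (σ * Real.sqrt T) (σ^2*T/2) x s)^2/((σ * Real.sqrt T)^2*x^2)
            - 1/((σ * Real.sqrt T)^2*x^2)
            - qq (σ * Real.sqrt T) (σ^2*T/2) x s/((σ * Real.sqrt T)*x^2))) ha.ne'
    have eq_q : ∀ t : ℝ, qq (σ * Real.sqrt T) (σ^2*T/2) x
        ((Real.log x - σ^2*T/2) + (σ * Real.sqrt T)*t) = t := by
      intro t
      unfold qq
      rw [show (Real.log x - σ^2*T/2) + (σ * Real.sqrt T)*t - (Real.log x - σ^2*T/2)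
          = (σ * Real.sqrt T)*t from by ring,
        mul_div_cancel_left₀ _ ha.ne']
    have eq_exp : ∀ t : ℝ, Real.exp ((Real.log x - σ^2*T/2) + (σ * Real.sqrt T)*t)
        = x * Real.exp (σ * Real.sqrt T * t - σ^2*T/2) := by
      intro t
      rw [show (Real.log x - σ^2*T/2) + (σ * Real.sqrt T)*t
          = Real.log x + ((σ * Real.sqrt T)*t - σ^2*T/2) from by ring,
        Real.exp_add, Real.exp_log hx]
    calc ∫ s, FF2 f (Real.sqrt (2*Real.pi))⁻¹ (σ * Real.sqrt T) (σ^2*T/2) x s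
        = ∫ s, (σ * Real.sqrt T)⁻¹ * (((Real.sqrt (2*Real.pi))⁻¹ *
            Real.exp (-(((s - (Real.log x - σ^2*T/2))/(σ * Real.sqrt T))^2)/2)) *
            (f (Real.exp s) *
              ((qq (σ * Real.sqrt T) (σ^2*T/2) x s)^2/((σ * Real.sqrt T)^2*x^2)
                - 1/((σ * Real.sqrt T)^2*x^2)
                - qq (σ * Real.sqrt T) (σ^2*T/2) x s/((σ * Real.sqrt T)*x^2)))) := by
          congr 1
          funext s
          unfold FF2 phi qq
          ring
      _ = (σ * Real.sqrt T)⁻¹ * ∫ s, (((Real.sqrt (2*Real.pi))⁻¹ *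
            Real.exp (-(((s - (Real.log x - σ^2*T/2))/(σ * Real.sqrt T))^2)/2)) *
            (f (Real.exp s) *
              ((qq (σ * Real.sqrt T) (σ^2*T/2) x s)^2/((σ * Real.sqrt T)^2*x^2)
                - 1/((σ * Real.sqrt T)^2*x^2)
                - qq (σ * Real.sqrt T) (σ^2*T/2) x s/((σ * Real.sqrt T)*x^2)))) :=
          integral_const_mul _ _
      _ = ∫ t, ((Real.sqrt (2*Real.pi))⁻¹ * Real.exp (-(t^2)/2)) *
            (f (Real.exp ((Real.log x - σ^2*T/2) + (σ * Real.sqrt T)*t)) *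
              ((qq (σ * Real.sqrt T) (σ^2*T/2) x ((Real.log x - σ^2*T/2) + (σ * Real.sqrt T)*t))^2/((σ * Real.sqrt T)^2*x^2)
                - 1/((σ * Real.sqrt T)^2*x^2)
                - qq (σ * Real.sqrt T) (σ^2*T/2) x ((Real.log x - σ^2*T/2) + (σ * Real.sqrt T)*t)/((σ * Real.sqrt T)*x^2))) := by
          rw [e2, abs_of_pos ha, ← mul_assoc, inv_mul_cancel₀ ha.ne', one_mul]
      _ = ∫ y, ((Real.sqrt (2*Real.pi))⁻¹ * Real.exp (-(y^2)/2)) *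
            (f (x * Real.exp (σ * Real.sqrt T * y - σ^2*T/2)) *
              ((y / (x * σ * Real.sqrt T))^2 - y/(x^2*σ*Real.sqrt T) - 1/(x^2*σ^2*T))) := by
          congr 1
          funext t
          rw [eq_q, eq_exp, hbr]
      _ = ∫ ω, f (x * Real.exp (σ * Real.sqrt T * G ω - σ^2*T/2)) *
          ((G ω / (x * σ * Real.sqrt T))^2 - G ω/(x^2*σ*Real.sqrt T) - 1/(x^2*σ^2*T)) ∂μ :=
          e1.symm
  rw [← hfinal]
  exact hD2
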